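/- Let h : [a,b] → ℝ be concave with 0 ≤ h ≤ 1, and let J ⊆ [a,b] be an interval on which h(x) ≥ 1 - L⁻², located in the middle half of an interval of length L on which h ≥ 1 - L⁻². Then |h'(x)| ≤ C·L⁻³ for all x ∈ J where h is differentiable, for an absolute constant C. -/

import Mathlib

/-- For a concave `h : [a,b] → [0,1]` with `h ≥ 1 - L⁻²` on an interval
`I = [c, c+L] ⊆ [a,b]`, one has `|h'(x)| ≤ C L⁻³` for all `x` in the middle half
`J = [c + L/4, c + 3L/4]` where `h` is differentiable, for an absolute constant `C`. -/
theorem stmt_1 : ∃ C : ℝ, 0 < C ∧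
    ∀ (a b c L : ℝ) (h : ℝ → ℝ),
      ConcaveOn ℝ (Set.Icc a b) h →
      (∀ x ∈ Set.Icc a b, 0 ≤ h x ∧ h x ≤ 1) →
      2 ≤ L →
      Set.Icc c (c + L) ⊆ Set.Icc a b →
      (∀ x ∈ Set.Icc c (c + L), 1 - L⁻¹ ^ 2 ≤ h x) →
      ∀ x ∈ Set.Icc (c + L / 4) (c + 3 * L / 4),
        DifferentiableAt ℝ h x → |deriv h x| ≤ C * L⁻¹ ^ 3 := by
  refine ⟨4, by norm_num, ?_⟩
  intro a b c L h hconc hbd hL hsub hlb x hx hd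
  obtain ⟨hx1, hx2⟩ := hx
  have hLpos : (0:ℝ) < L := lt_of_lt_of_le (by norm_num) hL
  have hcx : c < x := by linarith
  have hxcL : x < c + L := by linarith
  have hcmem : c ∈ Set.Icc a b := hsub ⟨le_refl c, by linarith⟩
  have hxmem : x ∈ Set.Icc a b := hsub ⟨by linarith, by linarith⟩
  have hcLmem : (c + L) ∈ Set.Icc a b := hsub ⟨by linarith, le_refl _⟩
  have hub := hconc.deriv_le_slope hcmem hxmem hcx hd
  have hlbd := hconc.slope_le_deriv hxmem hcLmem hxcL hd
  rw [slope_def_field] at hub hlbd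
  have hkey : L⁻¹ ^ 2 / (L / 4) = 4 * L⁻¹ ^ 3 := by
    field_simp
  rw [abs_le]
  constructor
  · -- lower bound: -(4 L⁻³) ≤ slope h x (c+L) ≤ deriv h x
    have hnum : -((h (c + L) - h x)) ≤ L⁻¹ ^ 2 := by
      have h1 := hlb (c + L) ⟨by linarith, le_refl _⟩
      have h2 := (hbd x hxmem).2
      linarith
    have hden : L / 4 ≤ c + L - x := by linarith
    have : -((h (c + L) - h x)) / (c + L - x) ≤ L⁻¹ ^ 2 / (L / 4) :=
      div_le_div₀ (by positivity) hnum (by linarith) hden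
    rw [neg_div] at this
    rw [hkey] at this
    linarith
  · -- upper bound: deriv h x ≤ slope h c x ≤ 4 L⁻³
    have hnum : h x - h c ≤ L⁻¹ ^ 2 := by
      have h1 := hlb c ⟨le_refl _, by linarith⟩
      have h2 := (hbd x hxmem).2
      linarith
    have hden : L / 4 ≤ x - c := by linarith
    have : (h x - h c) / (x - c) ≤ L⁻¹ ^ 2 / (L / 4) :=
      div_le_div₀ (by positivity) hnum (by linarith) hden
    rw [hkey] at this
    linarith
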